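/- Let m ≥ 1, let S_m(ℝ) = {X ∈ M_m(ℝ) : Xᵀ = X} be the real vector space of symmetric real m×m matrices (of dimension m(m+1)/2), and let A ∈ S_m(ℝ). Then the map B ↦ A·B·A maps S_m(ℝ) to itself, and its determinant as an ℝ-linear endomorphism of S_m(ℝ) equals (det A)^{m+1}. -/

import Mathlib

open Matrix

/-- The subspace of symmetric `m × m` matrices over a commutative ring. -/
def symMatrices (m : ℕ) (R : Type*) [CommRing R] :
    Submodule R (Matrix (Fin m) (Fin m) R) where
  carrier := {X | Xᵀ = X}
  add_mem' := by
    intro a b ha hb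
    simp only [Set.mem_setOf_eq] at *
    rw [Matrix.transpose_add, ha, hb]
  zero_mem' := Matrix.transpose_zero
  smul_mem' := by
    intro c a ha
    simp only [Set.mem_setOf_eq] at *
    rw [Matrix.transpose_smul, ha]

namespace Stmt10Aux

variable {m : ℕ}

/-- The linear endomorphism `B ↦ M B Mᵀ` of the space of symmetric matrices. -/
def Phi (M : Matrix (Fin m) (Fin m) ℝ) : symMatrices m ℝ →ₗ[ℝ] symMatrices m ℝ where
  toFun X := ⟨M * (X : Matrix (Fin m) (Fin m) ℝ) * Mᵀ, by
    have hX : (X : Matrix (Fin m) (Fin m) ℝ)ᵀ = X := X.2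
    show (M * (X : Matrix (Fin m) (Fin m) ℝ) * Mᵀ)ᵀ = _
    rw [Matrix.transpose_mul, Matrix.transpose_mul, Matrix.transpose_transpose, hX,
      Matrix.mul_assoc]⟩
  map_add' X Y := by
    ext : 1
    simp [Matrix.mul_add, Matrix.add_mul]
  map_smul' c X := by
    ext : 1
    simp [Matrix.mul_smul, Matrix.smul_mul]

lemma Phi_apply_coe (M : Matrix (Fin m) (Fin m) ℝ) (X : symMatrices m ℝ) :
    (Phi M X : Matrix (Fin m) (Fin m) ℝ) = M * (X : Matrix (Fin m) (Fin m) ℝ) * Mᵀ := rfl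

lemma Phi_mul (M N : Matrix (Fin m) (Fin m) ℝ) :
    Phi (M * N) = (Phi M).comp (Phi N) := by
  apply LinearMap.ext
  intro X
  apply Subtype.ext
  simp only [Phi_apply_coe, LinearMap.comp_apply, Matrix.transpose_mul, Matrix.mul_assoc]

lemma Phi_one : Phi (1 : Matrix (Fin m) (Fin m) ℝ) = LinearMap.id := by
  apply LinearMap.ext
  intro X
  apply Subtype.ext
  simp [Phi_apply_coe]

/-- The index type for the basis of symmetric matrices. -/
abbrev Idx (m : ℕ) := {p : Fin m × Fin m // p.1 ≤ p.2}

/-- The matrix built from coefficients indexed by pairs `i ≤ j`. -/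
def mval (c : Idx m → ℝ) : Matrix (Fin m) (Fin m) ℝ :=
  Matrix.of fun i j => if h : i ≤ j then c ⟨(i, j), h⟩ else c ⟨(j, i), le_of_not_ge h⟩

lemma mval_apply (c : Idx m → ℝ) (i j : Fin m) :
    mval c i j = if h : i ≤ j then c ⟨(i, j), h⟩ else c ⟨(j, i), le_of_not_ge h⟩ := rfl

lemma mval_symm (c : Idx m → ℝ) : (mval c)ᵀ = mval c := by
  ext i j
  simp only [Matrix.transpose_apply, mval_apply]
  rcases le_or_gt i j with h | h
  · rcases lt_or_eq_of_le h with h' | h'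
    · rw [dif_neg (not_le.2 h'), dif_pos h]
    · subst h'
      rw [dif_pos le_rfl]
  · rw [dif_pos h.le, dif_neg (not_le.2 h)]

/-- Symmetric matrices are linearly equivalent to functions on pairs `i ≤ j`. -/
noncomputable def symEquiv : symMatrices m ℝ ≃ₗ[ℝ] (Idx m → ℝ) where
  toFun X p := (X : Matrix (Fin m) (Fin m) ℝ) p.1.1 p.1.2
  map_add' X Y := by funext p; simp
  map_smul' c X := by funext p; simp
  invFun c := ⟨mval c, mval_symm c⟩
  left_inv := by
    intro X
    apply Subtype.ext
    ext i j
    have hX : ∀ a b : Fin m, (X : Matrix (Fin m) (Fin m) ℝ) b a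
        = (X : Matrix (Fin m) (Fin m) ℝ) a b := by
      intro a b
      conv_rhs => rw [← X.2]
      rfl
    show mval (fun p => (X : Matrix (Fin m) (Fin m) ℝ) p.1.1 p.1.2) i j = (X : Matrix (Fin m) (Fin m) ℝ) i j
    rw [mval_apply]
    split
    · rfl
    · exact hX i j
  right_inv := by
    intro c
    funext p
    show mval c p.1.1 p.1.2 = c p
    rw [mval_apply, dif_pos p.2]

/-- The standard basis of the space of symmetric matrices. -/
noncomputable def symBasis (m : ℕ) : Module.Basis (Idx m) ℝ (symMatrices m ℝ) :=
  Module.Basis.ofEquivFun symEquiv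

lemma symBasis_coe (p : Idx m) :
    ((symBasis m p : symMatrices m ℝ) : Matrix (Fin m) (Fin m) ℝ) = mval (Pi.single p 1) := by
  rw [symBasis, Module.Basis.coe_ofEquivFun]
  rfl

lemma det_Phi_diagonal (d : Fin m → ℝ) :
    LinearMap.det (Phi (Matrix.diagonal d)) = (∏ i, d i) ^ (m + 1) := by
  classical
  rw [← LinearMap.det_toMatrix (symBasis m)]
  have hmat : LinearMap.toMatrix (symBasis m) (symBasis m) (Phi (Matrix.diagonal d))
      = Matrix.diagonal (fun p : Idx m => d p.1.1 * d p.1.2) := by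
    ext q p
    rw [LinearMap.toMatrix_apply]
    have hrepr : ∀ Y : symMatrices m ℝ, (symBasis m).repr Y q
        = (Y : Matrix (Fin m) (Fin m) ℝ) q.1.1 q.1.2 := fun Y => rfl
    rw [hrepr]
    have : (Phi (Matrix.diagonal d) (symBasis m p) : Matrix (Fin m) (Fin m) ℝ) q.1.1 q.1.2
        = d q.1.1 * mval (Pi.single p 1) q.1.1 q.1.2 * d q.1.2 := by
      rw [Phi_apply_coe, symBasis_coe, Matrix.diagonal_transpose,
        Matrix.mul_diagonal, Matrix.diagonal_mul]
    rw [this, mval_apply, dif_pos q.2]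
    have hqeta : (⟨(q.1.1, q.1.2), q.2⟩ : Idx m) = q := rfl
    rw [hqeta]
    by_cases hqp : q = p
    · subst hqp
      simp [Matrix.diagonal_apply_eq, Pi.single_eq_same]
    · rw [Pi.single_eq_of_ne hqp, Matrix.diagonal_apply_ne _ hqp]
      ring
  rw [hmat, Matrix.det_diagonal]
  -- now the combinatorial identity
  rw [← Finset.prod_subtype (Finset.univ.filter fun p : Fin m × Fin m => p.1 ≤ p.2)
    (by simp) (fun p : Fin m × Fin m => d p.1 * d p.2)]
  rw [Finset.prod_filter, Fintype.prod_prod_type]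
  have key : ∀ i : Fin m, (∏ j : Fin m, if i ≤ j then d i * d j else 1)
      = (∏ j : Fin m, if i ≤ j then d i else 1) * (∏ j : Fin m, if i ≤ j then d j else 1) := by
    intro i
    rw [← Finset.prod_mul_distrib]
    refine Finset.prod_congr rfl fun j _ => ?_
    by_cases h : i ≤ j <;> simp [h]
  calc (∏ i : Fin m, ∏ j : Fin m, if i ≤ j then d i * d j else 1)
      = (∏ i : Fin m, ∏ j : Fin m, if i ≤ j then d i else 1)
        * (∏ i : Fin m, ∏ j : Fin m, if i ≤ j then d j else 1) := by
        rw [← Finset.prod_mul_distrib]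
        exact Finset.prod_congr rfl fun i _ => key i
    _ = (∏ i : Fin m, d i ^ (m - i.val)) * (∏ j : Fin m, d j ^ (j.val + 1)) := by
        congr 1
        · refine Finset.prod_congr rfl fun i _ => ?_
          rw [← Finset.prod_filter, Finset.prod_const]
          congr 1
          have : Finset.univ.filter (fun j : Fin m => i ≤ j) = Finset.Ici i := by
            ext j; simp
          rw [this, Fin.card_Ici]
        · rw [Finset.prod_comm]
          refine Finset.prod_congr rfl fun j _ => ?_
          rw [← Finset.prod_filter, Finset.prod_const]
          congr 1
          have : Finset.univ.filter (fun i : Fin m => i ≤ j) = Finset.Iic j := by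
            ext i; simp
          rw [this, Fin.card_Iic]
    _ = ∏ i : Fin m, d i ^ (m + 1) := by
        rw [← Finset.prod_mul_distrib]
        refine Finset.prod_congr rfl fun i _ => ?_
        rw [← pow_add]
        congr 1
        have := i.isLt
        omega
    _ = (∏ i, d i) ^ (m + 1) := by rw [Finset.prod_pow]

end Stmt10Aux

/-- For `A ∈ S_m(ℝ)`, the map `B ↦ A·B·A` maps `S_m(ℝ)` to itself, and its
determinant as an ℝ-linear endomorphism of `S_m(ℝ)` equals `(det A)^(m+1)`. -/
theorem stmt_10 (m : ℕ) (hm : 1 ≤ m) (A : Matrix (Fin m) (Fin m) ℝ) (hA : Aᵀ = A) :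
    (∀ B : Matrix (Fin m) (Fin m) ℝ, Bᵀ = B → (A * B * A)ᵀ = A * B * A)
    ∧ ∀ P : symMatrices m ℝ →ₗ[ℝ] symMatrices m ℝ,
        (∀ X : symMatrices m ℝ, (P X : Matrix (Fin m) (Fin m) ℝ)
          = A * (X : Matrix (Fin m) (Fin m) ℝ) * A) →
        LinearMap.det P = A.det ^ (m + 1) := by
  open Stmt10Aux in
  constructor
  · intro B hB
    rw [Matrix.transpose_mul, Matrix.transpose_mul, hA, hB, Matrix.mul_assoc]
  · intro P hP
    have hP' : P = Phi A := by
      apply LinearMap.ext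
      intro X
      apply Subtype.ext
      rw [hP X, Phi_apply_coe, hA]
    have hH : A.IsHermitian := by
      rwa [Matrix.IsHermitian, Matrix.conjTranspose_eq_transpose_of_trivial]
    set U : Matrix (Fin m) (Fin m) ℝ := (hH.eigenvectorUnitary : Matrix (Fin m) (Fin m) ℝ)
      with hU
    have hspec : A = U * Matrix.diagonal hH.eigenvalues * star U := by
      have := hH.spectral_theorem
      rwa [RCLike.ofReal_real_eq_id, Function.id_comp] at this
    have hUU : U * star U = 1 :=
      Matrix.mem_unitaryGroup_iff.mp hH.eigenvectorUnitary.2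
    have hdetU : LinearMap.det (Phi U) * LinearMap.det (Phi (star U)) = 1 := by
      rw [← LinearMap.det_comp, ← Phi_mul, hUU, Phi_one, LinearMap.det_id]
    have hdet : A.det = ∏ i, hH.eigenvalues i := by
      have := hH.det_eq_prod_eigenvalues
      simpa using this
    rw [hP', hdet]
    conv_lhs => rw [hspec, Phi_mul, Phi_mul]
    rw [LinearMap.det_comp, LinearMap.det_comp, det_Phi_diagonal, mul_right_comm,
      hdetU, one_mul]
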